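/- For integers m ∈ ℤ and n ≥ 1, let α_{m,n} := (1 − n³ − i m³)/(1 + n³ + i m³) ∈ ℂ. Then the family (1 − |α_{m,n}|)_{(m,n) ∈ ℤ × {n ≥ 1}} is summable: Σ_{n=1}^∞ Σ_{m∈ℤ} (1 − |α_{m,n}|) < +∞. -/

import Mathlib

open Complex

noncomputable section

/-- The point `α_{m,n} = (1 − n³ − i m³)/(1 + n³ + i m³)` of the unit disc. -/
def alphaMN (m : ℤ) (n : ℕ) : ℂ :=
  ((1 : ℂ) - (n : ℂ) ^ 3 - Complex.I * (m : ℂ) ^ 3) /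
    ((1 : ℂ) + (n : ℂ) ^ 3 + Complex.I * (m : ℂ) ^ 3)


lemma absSq_num (m : ℤ) (n : ℕ) :
    (‖(1 : ℂ) - (n : ℂ) ^ 3 - Complex.I * (m : ℂ) ^ 3‖)^2
      = (1 - (n:ℝ)^3)^2 + (m:ℝ)^6 := by
  rw [Complex.sq_norm, Complex.normSq_apply]
  simp only [← Complex.ofReal_natCast, ← Complex.ofReal_intCast, ← Complex.ofReal_pow,
    Complex.sub_re, Complex.sub_im, Complex.mul_re, Complex.mul_im, Complex.I_re, Complex.I_im,
    Complex.one_re, Complex.one_im, Complex.ofReal_re, Complex.ofReal_im]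
  ring

lemma absSq_den (m : ℤ) (n : ℕ) :
    (‖(1 : ℂ) + (n : ℂ) ^ 3 + Complex.I * (m : ℂ) ^ 3‖)^2
      = (1 + (n:ℝ)^3)^2 + (m:ℝ)^6 := by
  rw [Complex.sq_norm, Complex.normSq_apply]
  simp only [← Complex.ofReal_natCast, ← Complex.ofReal_intCast, ← Complex.ofReal_pow,
    Complex.add_re, Complex.add_im, Complex.mul_re, Complex.mul_im, Complex.I_re, Complex.I_im,
    Complex.one_re, Complex.one_im, Complex.ofReal_re, Complex.ofReal_im]
  ring

lemma amgm_key (s w : ℝ) (hs1 : 1 ≤ s) (hw0 : 0 ≤ w) :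
    8 * s^3 * (1 + w) ≤ 16 * (s^4 + w^4) := by
  nlinarith [mul_nonneg (sq_nonneg (s - w)) (by positivity : (0:ℝ) ≤ 3*s^2 + 2*s*w + w^2),
    pow_le_pow_right₀ hs1 (by norm_num : 3 ≤ 4)]

lemma real_bound (X T A B : ℝ) (hX1 : 1 ≤ X) (hT0 : 0 ≤ T) (hA0 : 0 ≤ A) (hB0 : 0 ≤ B)
    (hA2 : A^2 = (1 - X)^2 + T^6) (hB2 : B^2 = (1 + X)^2 + T^6) :
    1 - A / B ≤ 16 / (Real.sqrt ((1 + T)^3) * Real.sqrt X) := by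
  have hB2' : (2:ℝ) ≤ B := by nlinarith [sq_nonneg (B - 2), sq_nonneg (X - 1), pow_nonneg hT0 6]
  have hBpos : (0:ℝ) < B := by linarith
  have hAB : A ≤ B := by nlinarith
  have step1 : 1 - A / B ≤ 4 * X / B^2 := by
    rw [le_div_iff₀ (by positivity)]
    have h1 : (1 - A / B) * B ^ 2 = B^2 - A * B := by field_simp
    nlinarith [mul_le_mul_of_nonneg_right hAB hA0]
  set s := Real.sqrt X with hsdef
  set w := Real.sqrt (T^3) with hwdef
  have hs2 : s^2 = X := Real.sq_sqrt (by linarith)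
  have hs1 : (1:ℝ) ≤ s := by nlinarith [Real.sqrt_nonneg X]
  have hw2 : w^2 = T^3 := Real.sq_sqrt (by positivity)
  have hw0 : 0 ≤ w := Real.sqrt_nonneg _
  have hcube : Real.sqrt ((1 + T)^3) ≤ 2 * (1 + w) := by
    have h1 : (1 + T)^3 ≤ (2 * (1 + w))^2 := by nlinarith [sq_nonneg (T - 1)]
    calc Real.sqrt ((1 + T)^3) ≤ Real.sqrt ((2 * (1 + w))^2) := Real.sqrt_le_sqrt h1
      _ = 2 * (1 + w) := Real.sqrt_sq (by positivity)
  have hsq0 : (0:ℝ) < Real.sqrt ((1 + T)^3) := Real.sqrt_pos.mpr (by positivity)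
  have step2 : 4 * X / B^2 ≤ 16 / (Real.sqrt ((1 + T)^3) * s) := by
    rw [div_le_div_iff₀ (by positivity) (by positivity)]
    have key : 8 * s^3 * (1 + w) ≤ 16 * (s^4 + w^4) := amgm_key s w hs1 hw0
    have hXs : 4 * X * (Real.sqrt ((1+T)^3) * s) ≤ 8 * s^3 * (1 + w) := by
      calc 4 * X * (Real.sqrt ((1+T)^3) * s) = (4 * s^3) * Real.sqrt ((1+T)^3) := by
            rw [← hs2]; ring
        _ ≤ (4 * s^3) * (2 * (1 + w)) :=
            mul_le_mul_of_nonneg_left hcube (by positivity)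
        _ = 8 * s^3 * (1 + w) := by ring
    have hBlow : 16 * (s^4 + w^4) ≤ 16 * B^2 := by nlinarith
    linarith
  linarith

lemma alphaMN_bound (m : ℤ) (n : ℕ) (hn : 1 ≤ n) :
    1 - ‖alphaMN m n‖
      ≤ (4 / Real.sqrt ((1 + |(m:ℝ)|)^3)) * (4 / Real.sqrt ((n:ℝ)^3)) := by
  have hn' : (1:ℝ) ≤ (n:ℝ) := by exact_mod_cast hn
  have hX1 : (1:ℝ) ≤ (n:ℝ)^3 := by
    have h := sub_nonneg.2 hn'
    nlinarith [mul_nonneg (mul_nonneg h h) h]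
  have hT0 : (0:ℝ) ≤ |(m:ℝ)| := abs_nonneg _
  have hm6 : (m:ℝ)^6 = |(m:ℝ)|^6 := by
    rw [← _root_.abs_pow, _root_.abs_of_nonneg (by positivity : (0:ℝ) ≤ (m:ℝ)^6)]
  have hA2 := absSq_num m n
  have hB2 := absSq_den m n
  rw [hm6] at hA2 hB2
  have habs : ‖alphaMN m n‖
      = ‖(1 : ℂ) - (n : ℂ) ^ 3 - Complex.I * (m : ℂ) ^ 3‖
        / ‖(1 : ℂ) + (n : ℂ) ^ 3 + Complex.I * (m : ℂ) ^ 3‖ := by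
    rw [alphaMN, norm_div]
  have hmain := real_bound ((n:ℝ)^3) |(m:ℝ)| _ _ hX1 hT0
    (norm_nonneg _) (norm_nonneg _) hA2 hB2
  have hfin : (4 / Real.sqrt ((1 + |(m:ℝ)|)^3)) * (4 / Real.sqrt ((n:ℝ)^3))
      = 16 / (Real.sqrt ((1 + |(m:ℝ)|)^3) * Real.sqrt ((n:ℝ)^3)) := by
    rw [div_mul_div_comm]; norm_num
  rw [habs, hfin]
  exact hmain

lemma sumNat : Summable (fun n : ℕ => 4 / Real.sqrt ((n:ℝ)^3)) := by
  have h := (Real.summable_one_div_nat_rpow (p := 3/2)).mpr (by norm_num)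
  apply (h.mul_left 4).congr
  intro n
  have : Real.sqrt ((n:ℝ)^3) = (n:ℝ) ^ ((3:ℝ)/2) := by
    rw [Real.sqrt_eq_rpow, ← Real.rpow_natCast (n:ℝ) 3, ← Real.rpow_mul (n.cast_nonneg)]
    norm_num
  rw [this]
  ring

set_option maxHeartbeats 1000000 in
lemma sumNat' : Summable (fun n : ℕ => 4 / Real.sqrt ((1 + (n:ℝ))^3)) := by
  have h : Summable (fun n : ℕ => 4 / Real.sqrt ((((n + 1 : ℕ)):ℝ)^3)) :=
    (summable_nat_add_iff 1).mpr sumNat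
  apply h.congr
  intro n
  push_cast
  rw [add_comm ((n:ℝ)) 1]

lemma sumInt : Summable (fun m : ℤ => 4 / Real.sqrt ((1 + |(m:ℝ)|)^3)) := by
  apply Summable.of_nat_of_neg
  · apply sumNat'.congr
    intro n; norm_num
  · apply sumNat'.congr
    intro n
    push_cast
    rw [abs_neg, _root_.abs_of_nonneg (by positivity : (0:ℝ) ≤ (n:ℝ))]

set_option maxHeartbeats 1000000 in
/-- The family `(1 − |α_{m,n}|)_{m ∈ ℤ, n ≥ 1}` is summable (the Blaschke condition). -/
theorem alphaMN_blaschke_summable :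
    Summable (fun p : ℤ × {n : ℕ // 1 ≤ n} => 1 - ‖alphaMN p.1 p.2‖) := by
  have hg : Summable (fun p : ℤ × {n : ℕ // 1 ≤ n} =>
      (4 / Real.sqrt ((1 + |(p.1:ℝ)|)^3)) * (4 / Real.sqrt (((p.2:ℕ):ℝ)^3))) := by
    exact sumInt.mul_of_nonneg (sumNat.comp_injective Subtype.val_injective)
      (fun m => by positivity) (fun n => by dsimp [Function.comp]; positivity)
  apply Summable.of_nonneg_of_le ?_ ?_ hg
  · intro p
    have hX1 : (1:ℝ) ≤ ((p.2:ℕ):ℝ)^3 := by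
      have : (1:ℝ) ≤ ((p.2:ℕ):ℝ) := by exact_mod_cast p.2.2
      nlinarith [sub_nonneg.2 this, mul_nonneg (mul_nonneg (sub_nonneg.2 this) (sub_nonneg.2 this)) (sub_nonneg.2 this)]
    have hA2 := absSq_num p.1 (p.2:ℕ)
    have hB2 := absSq_den p.1 (p.2:ℕ)
    have habs : ‖alphaMN p.1 p.2‖ ≤ 1 := by
      rw [alphaMN, norm_div]
      set A := ‖(1 : ℂ) - ((p.2:ℕ) : ℂ) ^ 3 - Complex.I * (p.1 : ℂ) ^ 3‖ with hA
      set B := ‖(1 : ℂ) + ((p.2:ℕ) : ℂ) ^ 3 + Complex.I * (p.1 : ℂ) ^ 3‖ with hB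
      have hA0 : 0 ≤ A := norm_nonneg _
      have hB0 : 0 ≤ B := norm_nonneg _
      have hBpos : (0:ℝ) < B := by nlinarith [sq_nonneg (B - 2), sq_nonneg (((p.2:ℕ):ℝ)^3 - 1)]
      rw [div_le_one hBpos]
      nlinarith
    linarith
  · exact fun p => alphaMN_bound p.1 p.2 p.2.2
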